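/- Let N ≥ 3 and b > 0, and define W : ℝ^N → ℝ by W(x) = (1 + |x|^{2+b}/((N+b)(N−2)))^{−(N−2)/(2+b)}. Then W is positive, radial, twice continuously differentiable on ℝ^N, W ∈ L^{2N/(N−2)}(ℝ^N) with ∇W ∈ L²(ℝ^N), and W solves the energy-critical equation −ΔW(x) = |x|^b W(x)^{(N+2+2b)/(N−2)} for every x ∈ ℝ^N. -/

import Mathlib

open MeasureTheory Filter
open scoped ENNReal NNReal BigOperators

noncomputable section

abbrev Euc (N : ℕ) := EuclideanSpace ℝ (Fin N)

/-- A function on `ℝ^N` is radial if its value depends only on the norm of the argument. -/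
def Radial {N : ℕ} {α : Type*} (f : Euc N → α) : Prop :=
  ∀ x y : Euc N, ‖x‖ = ‖y‖ → f x = f y

/-- The Laplacian `Δφ = ∑ᵢ ∂ᵢᵢ φ`. -/
noncomputable def lap {N : ℕ} (φ : Euc N → ℝ) (x : Euc N) : ℝ :=
  ∑ i : Fin N, iteratedFDeriv ℝ 2 φ x ![EuclideanSpace.single i 1, EuclideanSpace.single i 1]

/-- The explicit energy-critical ground state
`W(x) = (1 + |x|^{2+b}/((N+b)(N-2)))^{-(N-2)/(2+b)}`. -/
noncomputable def Wfun (N : ℕ) (b : ℝ) (x : Euc N) : ℝ :=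
  (1 + ‖x‖ ^ (2 + b) / (((N : ℝ) + b) * ((N : ℝ) - 2))) ^ (-(((N : ℝ) - 2) / (2 + b)))

namespace WAux
open Real
open scoped RealInnerProductSpace

variable {N : ℕ} {b : ℝ}

def cst (N : ℕ) (b : ℝ) : ℝ := ((N:ℝ)+b)*((N:ℝ)-2)
def pex (N : ℕ) (b : ℝ) : ℝ := ((N:ℝ)-2)/(2+b)
def kk (N : ℕ) (b : ℝ) : ℝ := -(1/((N:ℝ)+b))
def Afun (N : ℕ) (b : ℝ) (x : Euc N) : ℝ := 1 + ‖x‖^(2+b)/cst N b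
def gfun (N : ℕ) (b q : ℝ) (x : Euc N) : ℝ := Afun N b x ^ (-q)
def gd (N : ℕ) (b q : ℝ) (x : Euc N) : ℝ :=
  (-q * Afun N b x ^ (-q - 1)) * ((2+b) * ‖x‖^b / cst N b)
def J (N : ℕ) : Euc N →L[ℝ] Euc N →L[ℝ] ℝ :=
  (isBoundedBilinearMap_inner (𝕜 := ℝ) (E := Euc N)).toContinuousLinearMap
def sf (N : ℕ) (b : ℝ) (x : Euc N) : ℝ := kk N b * (‖x‖^b * gfun N b (pex N b + 1) x)
def Vf (N : ℕ) (b : ℝ) (x : Euc N) : Euc N := sf N b x • x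
def mf (N : ℕ) (b : ℝ) (x : Euc N) : ℝ :=
  kk N b * (‖x‖^b * gd N b (pex N b + 1) x + gfun N b (pex N b + 1) x * (b * ‖x‖^(b-2)))
def Vd (N : ℕ) (b : ℝ) (x : Euc N) : Euc N →L[ℝ] Euc N :=
  sf N b x • ContinuousLinearMap.id ℝ (Euc N) + (mf N b x • innerSL ℝ x).smulRight x

lemma J_apply (x v : Euc N) : J N x v = ⟪x, v⟫ := rfl
lemma J_eq_innerSL (x : Euc N) : J N x = innerSL ℝ x := rfl

section basic
variable (hN : 3 ≤ N) (hb : 0 < b)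
include hN hb

lemma hNR : (3:ℝ) ≤ (N:ℝ) := by exact_mod_cast hN

lemma cst_pos : 0 < cst N b := by
  have := hNR hN hb
  exact mul_pos (by linarith) (by linarith)

lemma Nb_pos : (0:ℝ) < (N:ℝ) + b := by have := hNR hN hb; linarith

lemma A_one_le (x : Euc N) : 1 ≤ Afun N b x := by
  have h1 : 0 ≤ ‖x‖^(2+b) / cst N b :=
    div_nonneg (Real.rpow_nonneg (norm_nonneg _) _) (cst_pos hN hb).le
  simp only [Afun]; linarith

lemma A_pos (x : Euc N) : 0 < Afun N b x := lt_of_lt_of_le one_pos (A_one_le hN hb x)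

lemma g_pos (q : ℝ) (x : Euc N) : 0 < gfun N b q x := Real.rpow_pos_of_pos (A_pos hN hb x) _

lemma g_le_one {q : ℝ} (hq : 0 ≤ q) (x : Euc N) : gfun N b q x ≤ 1 :=
  Real.rpow_le_one_of_one_le_of_nonpos (A_one_le hN hb x) (by linarith)

end basic

lemma Wfun_eq : Wfun N b = gfun N b (pex N b) := rfl


lemma norm_rpow_hasFDerivAt_ne (q : ℝ) {x : Euc N} (hx : x ≠ 0) :
    HasFDerivAt (fun y : Euc N => ‖y‖^q) ((q * ‖x‖^(q-2)) • innerSL ℝ x) x := by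
  have hx2 : (0:ℝ) < ‖x‖ := norm_pos_iff.mpr hx
  have h0 : HasFDerivAt (fun y : Euc N => (‖y‖^2 : ℝ)) ((2:ℕ) • innerSL ℝ x) x :=
    (hasStrictFDerivAt_norm_sq x).hasFDerivAt
  have h1 := h0.rpow_const (p := q/2) (Or.inl (by positivity))
  have hfn : (fun y : Euc N => (‖y‖^2 : ℝ)^(q/2)) = fun y : Euc N => ‖y‖^q := by
    funext y
    rw [← Real.rpow_natCast ‖y‖ 2, ← Real.rpow_mul (norm_nonneg y)]
    congr 1
    push_cast
    ring
  rw [hfn] at h1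
  refine h1.congr_fderiv (Eq.symm ?_)
  ext v
  simp only [ContinuousLinearMap.smul_apply, smul_eq_mul, ContinuousLinearMap.coe_smul',
    Pi.smul_apply, nsmul_eq_mul, Nat.cast_ofNat]
  rw [← Real.rpow_natCast ‖x‖ 2, ← Real.rpow_mul (norm_nonneg x),
    show (2:ℕ) * (q/2 - 1) = q - 2 by push_cast; ring]
  ring

variable (hN : 3 ≤ N) (hb : 0 < b)
include hN hb

lemma A_hasFDerivAt (x : Euc N) :
    HasFDerivAt (Afun N b) (((2+b) * ‖x‖^b / cst N b) • innerSL ℝ x) x := by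
  have h2b : (1:ℝ) < 2 + b := by linarith
  have heq : Afun N b = fun y : Euc N => 1 + ‖y‖^(2+b) * (cst N b)⁻¹ := by
    funext y; rw [Afun, div_eq_mul_inv]
  rw [heq]
  have h := ((hasFDerivAt_norm_rpow x h2b).mul_const (cst N b)⁻¹).const_add 1
  rw [show (2+b) - 2 = b by ring] at h
  refine h.congr_fderiv (Eq.symm ?_)
  ext v
  simp only [ContinuousLinearMap.smul_apply, smul_eq_mul, ContinuousLinearMap.coe_smul',
    Pi.smul_apply, ContinuousLinearMap.smulRight_apply, ContinuousLinearMap.coe_mul]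
  ring

lemma g_hasFDerivAt (q : ℝ) (x : Euc N) :
    HasFDerivAt (gfun N b q) (gd N b q x • innerSL ℝ x) x := by
  have h := (A_hasFDerivAt hN hb x).rpow_const (p := -q) (Or.inl (A_pos hN hb x).ne')
  rw [smul_smul] at h
  exact h

lemma W_hasFDerivAt (x : Euc N) : HasFDerivAt (Wfun N b) (J N (Vf N b x)) x := by
  have h := g_hasFDerivAt hN hb (pex N b) x
  rw [Wfun_eq]
  refine h.congr_fderiv (Eq.symm ?_)
  rw [Vf, _root_.map_smul, J_eq_innerSL]
  congr 1
  have hc := (cst_pos hN hb).ne'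
  have hnb := (Nb_pos hN hb).ne'
  have h2b : (2:ℝ) + b ≠ 0 := by linarith
  have hm2 : (N:ℝ) - 2 ≠ 0 := by have := hNR hN hb; linarith
  have hkey : kk N b = -pex N b * (2+b) / cst N b := by
    rw [kk, pex, cst]
    field_simp
  rw [sf, gd, gfun, show -(pex N b + 1) = -pex N b - 1 by ring, hkey]
  ring

lemma sf_hasFDerivAt {x : Euc N} (hx : x ≠ 0) :
    HasFDerivAt (sf N b) ((mf N b x) • innerSL ℝ x) x := by
  have h1 := norm_rpow_hasFDerivAt_ne (N := N) b hx
  have h2 := g_hasFDerivAt hN hb (pex N b + 1) x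
  have h3 := (h1.mul h2).const_mul (kk N b)
  refine h3.congr_fderiv (Eq.symm ?_)
  ext v
  simp only [mf, ContinuousLinearMap.smul_apply, smul_eq_mul, ContinuousLinearMap.coe_smul',
    Pi.smul_apply, ContinuousLinearMap.add_apply]
  ring

lemma Vd_zero : Vd N b 0 = 0 := by
  ext v
  simp [Vd, sf, Real.zero_rpow hb.ne']

lemma Vf_hasFDerivAt (x : Euc N) : HasFDerivAt (Vf N b) (Vd N b x) x := by
  by_cases hx : x = 0
  · subst hx
    rw [Vd_zero hN hb]
    rw [hasFDerivAt_iff_isLittleO]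
    have hVf0 : Vf N b 0 = 0 := by simp [Vf]
    have heq : (fun y : Euc N => Vf N b y - Vf N b 0 - (0 : Euc N →L[ℝ] Euc N) (y - 0))
        = fun y => sf N b y • y := by
      funext y; simp [hVf0, Vf]
    rw [heq]
    have hsf : Filter.Tendsto (sf N b) (nhds 0) (nhds 0) := by
      have hcont : Continuous (sf N b) :=
        continuous_const.mul ((continuous_norm.rpow_const fun x => Or.inr hb.le).mul
          ((continuous_const.add ((continuous_norm.rpow_const fun x =>
            Or.inr (by linarith)).div_const _)).rpow_const
            fun x => Or.inl (A_pos hN hb x).ne'))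
      have h0 : sf N b 0 = 0 := by simp [sf, Real.zero_rpow hb.ne']
      simpa [h0] using hcont.tendsto 0
    have h := ((Asymptotics.isLittleO_one_iff ℝ).mpr hsf).smul_isBigO
      (Asymptotics.isBigO_refl (fun y : Euc N => y - 0) (nhds 0))
    simpa using h
  · exact (sf_hasFDerivAt hN hb hx).smul (hasFDerivAt_id x)

end WAux

namespace WAux
open Real
open scoped RealInnerProductSpace

variable {N : ℕ} {b : ℝ}

def CC (N : ℕ) (b : ℝ) (x : Euc N) : ℝ :=
  (1/((N:ℝ)+b)) * ((pex N b + 1)*((2+b)/cst N b) * ‖x‖^(2*b+2) + b * ‖x‖^b)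

variable (hN : 3 ≤ N) (hb : 0 < b)
include hN hb

lemma pex_nonneg : 0 ≤ pex N b := by
  have := hNR hN hb
  exact div_nonneg (by linarith) (by linarith)

lemma continuous_A : Continuous (Afun N b) :=
  continuous_const.add ((continuous_norm.rpow_const fun _ => Or.inr (by linarith)).div_const _)

lemma continuous_g (q : ℝ) : Continuous (gfun N b q) :=
  (continuous_A hN hb).rpow_const fun x => Or.inl (A_pos hN hb x).ne'

lemma continuous_sf : Continuous (sf N b) :=
  continuous_const.mul ((continuous_norm.rpow_const fun _ => Or.inr hb.le).mul
    (continuous_g hN hb _))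

lemma continuous_Vf : Continuous (Vf N b) := (continuous_sf hN hb).smul continuous_id

lemma continuous_gd (q : ℝ) : Continuous (gd N b q) :=
  (continuous_const.mul ((continuous_A hN hb).rpow_const fun x =>
    Or.inl (A_pos hN hb x).ne')).mul
    ((continuous_const.mul (continuous_norm.rpow_const fun _ => Or.inr hb.le)).div_const _)

lemma Vd_norm_le (x : Euc N) : ‖Vd N b x‖ ≤ |sf N b x| + |mf N b x| * (‖x‖ * ‖x‖) := by
  refine (norm_add_le _ _).trans ?_
  gcongr
  · refine (norm_smul_le (sf N b x) (ContinuousLinearMap.id ℝ (Euc N))).trans ?_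
    rw [Real.norm_eq_abs]
    exact mul_le_of_le_one_right (abs_nonneg _) ContinuousLinearMap.norm_id_le
  · rw [ContinuousLinearMap.norm_smulRight_apply, norm_smul, Real.norm_eq_abs,
      innerSL_apply_norm, mul_assoc]

lemma gd_abs_le {q : ℝ} (hq : 0 ≤ q) (x : Euc N) :
    |gd N b q x| ≤ q * ((2+b) * ‖x‖^b / cst N b) := by
  have hA1 := A_one_le hN hb x
  have hApos := A_pos hN hb x
  have hsn : 0 ≤ (2+b) * ‖x‖^b / cst N b :=
    div_nonneg (mul_nonneg (by linarith) (Real.rpow_nonneg (norm_nonneg _) _))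
      (cst_pos hN hb).le
  have hgle : Afun N b x ^ (-q - 1) ≤ 1 :=
    Real.rpow_le_one_of_one_le_of_nonpos hA1 (by linarith)
  rw [gd, abs_mul, abs_mul, abs_neg, abs_of_nonneg hq,
    abs_of_nonneg (Real.rpow_nonneg hApos.le _), abs_of_nonneg hsn]
  calc q * Afun N b x ^ (-q - 1) * ((2+b) * ‖x‖^b / cst N b)
      ≤ q * 1 * ((2+b) * ‖x‖^b / cst N b) := by gcongr
    _ = q * ((2+b) * ‖x‖^b / cst N b) := by ring

lemma mf_mul_le (x : Euc N) : |mf N b x| * (‖x‖ * ‖x‖) ≤ CC N b x := by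
  have hnb := Nb_pos hN hb
  have hp1 : (0:ℝ) ≤ pex N b + 1 := by linarith [pex_nonneg hN hb]
  by_cases hx : x = 0
  · subst hx
    simp only [norm_zero, mul_zero]
    rw [CC]
    simp [Real.zero_rpow hb.ne', Real.zero_rpow (show 2*b+2 ≠ 0 by positivity)]
  · have hr : (0:ℝ) < ‖x‖ := norm_pos_iff.mpr hx
    have habs : |kk N b| = 1/((N:ℝ)+b) := by
      rw [kk, abs_neg, abs_of_pos (by positivity)]
    have h1 : |mf N b x| ≤ (1/((N:ℝ)+b)) *
        ((pex N b + 1)*((2+b)/cst N b) * (‖x‖^b * ‖x‖^b) + b * ‖x‖^(b-2)) := by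
      rw [mf, abs_mul, habs]
      gcongr (1/((N:ℝ)+b)) * ?_
      have hu : |‖x‖^b * gd N b (pex N b + 1) x|
          ≤ ‖x‖^b * ((pex N b + 1) * ((2+b) * ‖x‖^b / cst N b)) := by
        rw [abs_mul, abs_of_nonneg (Real.rpow_nonneg (norm_nonneg _) _)]
        exact mul_le_mul_of_nonneg_left (gd_abs_le hN hb hp1 x)
          (Real.rpow_nonneg (norm_nonneg _) _)
      have hv : |gfun N b (pex N b + 1) x * (b * ‖x‖^(b-2))|
          ≤ 1 * (b * ‖x‖^(b-2)) := by
        rw [abs_mul, abs_of_nonneg (g_pos hN hb _ x).le,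
          abs_of_nonneg (mul_nonneg hb.le (Real.rpow_nonneg (norm_nonneg _) _))]
        exact mul_le_mul_of_nonneg_right (g_le_one hN hb hp1 x)
          (mul_nonneg hb.le (Real.rpow_nonneg (norm_nonneg _) _))
      calc |‖x‖^b * gd N b (pex N b + 1) x
              + gfun N b (pex N b + 1) x * (b * ‖x‖^(b-2))|
          ≤ |‖x‖^b * gd N b (pex N b + 1) x|
              + |gfun N b (pex N b + 1) x * (b * ‖x‖^(b-2))| := abs_add_le _ _
        _ ≤ ‖x‖^b * ((pex N b + 1) * ((2+b) * ‖x‖^b / cst N b))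
              + 1 * (b * ‖x‖^(b-2)) := add_le_add hu hv
        _ = (pex N b + 1)*((2+b)/cst N b) * (‖x‖^b * ‖x‖^b) + b * ‖x‖^(b-2) := by
            ring
    have e2 : ‖x‖ * ‖x‖ = ‖x‖^(2:ℝ) := by
      rw [show (2:ℝ) = ((2:ℕ):ℝ) by norm_num, Real.rpow_natCast, sq]
    have eA : ‖x‖^b * ‖x‖^b * ‖x‖^(2:ℝ) = ‖x‖^(2*b+2) := by
      rw [← Real.rpow_add hr, ← Real.rpow_add hr]
      congr 1; ring
    have eB : ‖x‖^(b-2) * ‖x‖^(2:ℝ) = ‖x‖^b := by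
      rw [← Real.rpow_add hr]
      congr 1; ring
    calc |mf N b x| * (‖x‖ * ‖x‖)
        ≤ ((1/((N:ℝ)+b)) * ((pex N b + 1)*((2+b)/cst N b) * (‖x‖^b * ‖x‖^b)
            + b * ‖x‖^(b-2))) * (‖x‖ * ‖x‖) :=
          mul_le_mul_of_nonneg_right h1 (mul_nonneg (norm_nonneg _) (norm_nonneg _))
      _ = (1/((N:ℝ)+b)) * ((pex N b + 1)*((2+b)/cst N b) * (‖x‖^b * ‖x‖^b * ‖x‖^(2:ℝ))
            + b * (‖x‖^(b-2) * ‖x‖^(2:ℝ))) := by rw [e2]; ring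
      _ = CC N b x := by rw [eA, eB, CC]

set_option maxHeartbeats 1000000 in
lemma continuous_Vd : Continuous (Vd N b) := by
  rw [continuous_iff_continuousAt]
  intro x
  by_cases hx : x = 0
  · subst hx
    rw [ContinuousAt, Vd_zero hN hb]
    apply squeeze_zero_norm (fun y => (Vd_norm_le hN hb y).trans
      (add_le_add_right (mf_mul_le hN hb y) _))
    have hCC : Continuous (CC N b) := by
      apply continuous_const.mul
      exact (continuous_const.mul (continuous_norm.rpow_const fun _ =>
        Or.inr (by linarith))).add
        (continuous_const.mul (continuous_norm.rpow_const fun _ => Or.inr hb.le))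
    have hval : |sf N b 0| + CC N b 0 = 0 := by
      simp [sf, CC, Real.zero_rpow hb.ne', Real.zero_rpow (by positivity : 2*b+2 ≠ 0)]
    have := (((continuous_sf hN hb).abs.add hCC).tendsto 0)
    rwa [Pi.add_apply, hval] at this
  · apply ContinuousAt.add
    · exact ((continuous_sf hN hb).continuousAt).smul continuousAt_const
    · have hin : Continuous (fun y : Euc N => innerSL ℝ y) := by
        have : (fun y : Euc N => innerSL ℝ y) = fun y => J N y := rfl
        rw [this]
        exact (J N).continuous
      have hm : ContinuousAt (mf N b) x := by
        apply ContinuousAt.mul continuousAt_const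
        apply ContinuousAt.add
        · exact ((continuous_norm.rpow_const fun _ => Or.inr hb.le).continuousAt).mul
            ((continuous_gd hN hb _).continuousAt)
        · exact ((continuous_g hN hb _).continuousAt).mul
            (continuousAt_const.mul
              ((continuous_norm.continuousAt).rpow_const
                (Or.inl (norm_ne_zero_iff.mpr hx))))
      have h1 : ContinuousAt (fun y => (mf N b y • innerSL ℝ y : Euc N →L[ℝ] ℝ)) x :=
        hm.smul hin.continuousAt
      have hk : Continuous (fun p : (Euc N →L[ℝ] ℝ) × (Euc N) => p.1.smulRight p.2) :=
        isBoundedBilinearMap_smulRight.continuous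
      have h2 : ContinuousAt (fun y : Euc N =>
          ((mf N b y • innerSL ℝ y : Euc N →L[ℝ] ℝ), y)) x := h1.prodMk continuousAt_id
      exact (hk.continuousAt).comp h2

end WAux

namespace WAux
open Real
open scoped RealInnerProductSpace

variable {N : ℕ} {b : ℝ} (hN : 3 ≤ N) (hb : 0 < b)
include hN hb

lemma fderiv_Vf_eq : fderiv ℝ (Vf N b) = Vd N b :=
  funext fun x => (Vf_hasFDerivAt hN hb x).fderiv

lemma contDiff_Vf : ContDiff ℝ 1 (Vf N b) :=
  contDiff_one_iff_fderiv.2 ⟨fun x => (Vf_hasFDerivAt hN hb x).differentiableAt,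
    by rw [fderiv_Vf_eq hN hb]; exact continuous_Vd hN hb⟩

lemma fderiv_W_eq : fderiv ℝ (Wfun N b) = fun x => J N (Vf N b x) :=
  funext fun x => (W_hasFDerivAt hN hb x).fderiv

lemma contDiff_W : ContDiff ℝ 2 (Wfun N b) := by
  have h2 : (2 : WithTop ℕ∞) = 1 + 1 := by norm_num
  rw [h2, contDiff_succ_iff_fderiv]
  refine ⟨fun x => (W_hasFDerivAt hN hb x).differentiableAt, by simp, ?_⟩
  rw [fderiv_W_eq hN hb]
  exact (J N).contDiff.comp (contDiff_Vf hN hb)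

lemma F_hasFDerivAt (x : Euc N) :
    HasFDerivAt (fun y => J N (Vf N b y)) ((J N).comp (Vd N b x)) x :=
  ((J N).hasFDerivAt).comp x (Vf_hasFDerivAt hN hb x)

omit hN hb in
lemma sum_sq_eq (x : Euc N) : ∑ i : Fin N, x i * x i = ‖x‖ ^ (2:ℕ) := by
  have h := real_inner_self_eq_norm_sq x
  rw [← h]
  simp only [PiLp.inner_apply, RCLike.inner_apply, conj_trivial]

lemma lap_eq (x : Euc N) :
    lap (Wfun N b) x = mf N b x * ‖x‖ ^ (2:ℕ) + (N : ℝ) * sf N b x := by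
  have hff : fderiv ℝ (fderiv ℝ (Wfun N b)) x = (J N).comp (Vd N b x) := by
    rw [fderiv_W_eq hN hb]
    exact (F_hasFDerivAt hN hb x).fderiv
  have key : ∀ i : Fin N,
      iteratedFDeriv ℝ 2 (Wfun N b) x
        ![EuclideanSpace.single i 1, EuclideanSpace.single i 1]
      = mf N b x * (x i * x i) + sf N b x := by
    intro i
    rw [iteratedFDeriv_two_apply, hff]
    simp only [Matrix.cons_val_zero, Matrix.cons_val_one, Matrix.head_cons,
      ContinuousLinearMap.comp_apply, Vd, ContinuousLinearMap.add_apply,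
      ContinuousLinearMap.smul_apply, ContinuousLinearMap.id_apply,
      ContinuousLinearMap.smulRight_apply, innerSL_apply_apply, smul_eq_mul]
    rw [J_apply, inner_add_left, real_inner_smul_left, real_inner_smul_left]
    rw [show ⟪EuclideanSpace.single i (1:ℝ), EuclideanSpace.single i (1:ℝ)⟫ = 1 by
      simp [EuclideanSpace.inner_single_left, EuclideanSpace.single_apply]]
    rw [show ⟪x, EuclideanSpace.single i (1:ℝ)⟫ = x i by
      simp [EuclideanSpace.inner_single_right]]
    ring
  unfold lap
  rw [Finset.sum_congr rfl fun i _ => key i, Finset.sum_add_distrib,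
    Finset.sum_const, ← Finset.mul_sum, sum_sq_eq x, Finset.card_univ, Fintype.card_fin,
    nsmul_eq_mul]

end WAux

namespace WAux
open Real
open scoped RealInnerProductSpace

variable {N : ℕ} {b : ℝ}

def KK (N : ℕ) (b : ℝ) : ℝ := 2^(2+b) * max 1 (cst N b)

variable (hN : 3 ≤ N) (hb : 0 < b)
include hN hb

lemma pde (x : Euc N) :
    -(mf N b x * ‖x‖ ^ (2:ℕ) + (N : ℝ) * sf N b x)
      = ‖x‖ ^ b * Wfun N b x ^ (((N:ℝ) + 2 + 2*b) / ((N:ℝ) - 2)) := by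
  have hnb := Nb_pos hN hb
  have h2b : (0:ℝ) < 2 + b := by linarith
  have hm2 : (0:ℝ) < (N:ℝ) - 2 := by have := hNR hN hb; linarith
  have hcpos := cst_pos hN hb
  have hApos := A_pos hN hb x
  have hq : Wfun N b x ^ (((N:ℝ) + 2 + 2*b) / ((N:ℝ) - 2))
      = Afun N b x ^ (-pex N b - 2) := by
    rw [Wfun_eq, gfun, ← Real.rpow_mul hApos.le]
    congr 1
    rw [pex]
    field_simp
    ring
  rw [hq]
  by_cases hx : x = 0
  · subst hx
    simp [sf, mf, Real.zero_rpow hb.ne']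
  · have hr : (0:ℝ) < ‖x‖ := norm_pos_iff.mpr hx
    have e2 : (‖x‖:ℝ) ^ (2:ℕ) = ‖x‖ ^ (2:ℝ) := by
      rw [← Real.rpow_natCast ‖x‖ 2]; norm_num
    have eB : ‖x‖^(b-2) * ‖x‖^(2:ℝ) = ‖x‖^b := by
      rw [← Real.rpow_add hr]; congr 1; ring
    have eA2 : ‖x‖^b * ‖x‖^b * ‖x‖^(2:ℝ) = ‖x‖^b * ‖x‖^(2+b) := by
      rw [← Real.rpow_add hr, ← Real.rpow_add hr, ← Real.rpow_add hr]; congr 1; ring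
    have eG : Afun N b x ^ (-pex N b - 1)
        = Afun N b x * Afun N b x ^ (-pex N b - 2) := by
      rw [show -pex N b - 1 = 1 + (-pex N b - 2) by ring, Real.rpow_add hApos,
        Real.rpow_one]
    have hL : mf N b x * ‖x‖ ^ (2:ℕ)
        = kk N b * ( -((pex N b + 1)*(2+b)/cst N b) * (‖x‖^b * ‖x‖^(2+b))
            * Afun N b x ^ (-pex N b - 2)
          + b * ‖x‖^b * Afun N b x ^ (-pex N b - 1)) := by
      rw [mf, gd, gfun, e2,
        show -(pex N b + 1) - 1 = -pex N b - 2 by ring,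
        show -(pex N b + 1) = -pex N b - 1 by ring]
      calc kk N b * (‖x‖^b * ((-pex N b - 1) * Afun N b x ^ (-pex N b - 2)
              * ((2+b) * ‖x‖^b / cst N b))
            + Afun N b x ^ (-pex N b - 1) * (b * ‖x‖^(b-2))) * ‖x‖^(2:ℝ)
          = kk N b * ( -((pex N b + 1)*(2+b)/cst N b) * (‖x‖^b * ‖x‖^b * ‖x‖^(2:ℝ))
              * Afun N b x ^ (-pex N b - 2)
            + b * Afun N b x ^ (-pex N b - 1) * (‖x‖^(b-2) * ‖x‖^(2:ℝ))) := by ring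
        _ = _ := by rw [eB, eA2]; ring
    rw [hL, sf, gfun, show -(pex N b + 1) = -pex N b - 1 by ring, eG]
    simp only [Afun]
    rw [kk, pex, cst]
    have hc' : ((N:ℝ)+b) * ((N:ℝ)-2) ≠ 0 := by positivity
    field_simp
    ring

lemma KK_pos : 0 < KK N b :=
  mul_pos (Real.rpow_pos_of_pos two_pos _) (lt_of_lt_of_le one_pos (le_max_left _ _))

lemma A_lower (x : Euc N) : (1+‖x‖)^(2+b) / KK N b ≤ Afun N b x := by
  have h2b : (0:ℝ) ≤ 2+b := by linarith
  have h1r : (0:ℝ) < 1 + ‖x‖ := by positivity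
  rcases le_total ‖x‖ 1 with h|h
  · have h1 : (1+‖x‖)^(2+b) ≤ 2^(2+b) :=
      Real.rpow_le_rpow h1r.le (by linarith) h2b
    have hKK : (2:ℝ)^(2+b) ≤ KK N b := by
      rw [KK]
      nlinarith [le_max_left (1:ℝ) (cst N b), Real.rpow_pos_of_pos (show (0:ℝ) < 2 by norm_num) (2+b)]
    calc (1+‖x‖)^(2+b)/KK N b ≤ 2^(2+b)/2^(2+b) :=
          div_le_div₀ (Real.rpow_nonneg (by norm_num) _) h1
            (Real.rpow_pos_of_pos (by norm_num) _) hKK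
      _ = 1 := div_self (Real.rpow_pos_of_pos (by norm_num) _).ne'
      _ ≤ Afun N b x := A_one_le hN hb x
  · have hxp : (0:ℝ) < ‖x‖ := lt_of_lt_of_le one_pos h
    have h1 : (1+‖x‖)^(2+b) ≤ 2^(2+b) * ‖x‖^(2+b) := by
      rw [← Real.mul_rpow (by norm_num) hxp.le]
      exact Real.rpow_le_rpow h1r.le (by linarith) h2b
    have h2 : (1+‖x‖)^(2+b)/KK N b ≤ ‖x‖^(2+b)/cst N b := by
      rw [KK]
      calc (1+‖x‖)^(2+b)/(2^(2+b) * max 1 (cst N b))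
          ≤ (2^(2+b) * ‖x‖^(2+b))/(2^(2+b) * cst N b) :=
            div_le_div₀ (mul_nonneg (Real.rpow_nonneg (by norm_num) _)
                (Real.rpow_nonneg (norm_nonneg _) _)) h1
              (mul_pos (Real.rpow_pos_of_pos (by norm_num) _) (cst_pos hN hb))
              (mul_le_mul_of_nonneg_left (le_max_right 1 _)
                (Real.rpow_nonneg (by norm_num) _))
        _ = ‖x‖^(2+b)/cst N b := by
            rw [mul_div_mul_left _ _ (Real.rpow_pos_of_pos (by norm_num : (0:ℝ) < 2) (2+b)).ne']
    refine h2.trans ?_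
    simp only [Afun]
    linarith

lemma g_bound {q : ℝ} (hq : 0 ≤ q) (x : Euc N) :
    gfun N b q x ≤ KK N b ^ q * (1+‖x‖)^(-((2+b)*q)) := by
  have h1r : (0:ℝ) < 1+‖x‖ := by positivity
  have hlow : 0 < (1+‖x‖)^(2+b)/KK N b :=
    div_pos (Real.rpow_pos_of_pos h1r _) (KK_pos hN hb)
  have h := Real.rpow_le_rpow_of_nonpos hlow (A_lower hN hb x) (neg_nonpos.mpr hq)
  calc gfun N b q x ≤ ((1+‖x‖)^(2+b)/KK N b)^(-q) := h
    _ = KK N b ^ q * (1+‖x‖)^(-((2+b)*q)) := by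
      rw [Real.div_rpow (Real.rpow_nonneg h1r.le _) (KK_pos hN hb).le,
        ← Real.rpow_mul h1r.le, Real.rpow_neg (KK_pos hN hb).le,
        show (2+b)*(-q) = -((2+b)*q) by ring, div_eq_mul_inv, inv_inv, mul_comm]

end WAux

namespace WAux
open Real
open scoped RealInnerProductSpace

variable {N : ℕ} {b : ℝ} (hN : 3 ≤ N) (hb : 0 < b)
include hN hb

omit hN hb in
lemma memLp_aux {E' : Type*} [NormedAddCommGroup E'] {f : Euc N → E'} (hf : Continuous f)
    {C r s : ℝ} (hC : 0 ≤ C) (hs : 0 < s) (hrs : (N:ℝ) < r * s)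
    (hfb : ∀ x, ‖f x‖ ≤ C * (1+‖x‖)^(-r)) :
    MemLp f (ENNReal.ofReal s) volume := by
  have hs0 : ENNReal.ofReal s ≠ 0 := by
    simp [ENNReal.ofReal_eq_zero, not_le, hs]
  have hstop : ENNReal.ofReal s ≠ ⊤ := ENNReal.ofReal_ne_top
  have hto : (ENNReal.ofReal s).toReal = s := ENNReal.toReal_ofReal hs.le
  rw [← memLp_norm_rpow_iff hf.aestronglyMeasurable hs0 hstop,
    ENNReal.div_self hs0 hstop, memLp_one_iff_integrable, hto]
  have hint : Integrable (fun x : Euc N => C^s * (1 + ‖x‖)^(-(r*s))) volume :=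
    (integrable_one_add_norm (by rw [finrank_euclideanSpace_fin]; exact hrs)).const_mul _
  apply hint.mono' ((hf.norm.rpow_const fun x => Or.inr hs.le).aestronglyMeasurable)
  refine Filter.Eventually.of_forall fun x => ?_
  have h1r : (0:ℝ) < 1 + ‖x‖ := by positivity
  rw [Real.norm_eq_abs, abs_of_nonneg (Real.rpow_nonneg (norm_nonneg _) _)]
  calc ‖f x‖ ^ s ≤ (C * (1+‖x‖)^(-r)) ^ s :=
        Real.rpow_le_rpow (norm_nonneg _) (hfb x) hs.le
    _ = C^s * (1+‖x‖)^(-(r*s)) := by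
      rw [Real.mul_rpow hC (Real.rpow_nonneg h1r.le _), ← Real.rpow_mul h1r.le,
        show -r*s = -(r*s) by ring]

lemma W_bound (x : Euc N) :
    ‖Wfun N b x‖ ≤ KK N b ^ pex N b * (1+‖x‖)^(-((N:ℝ)-2)) := by
  have h2b : (0:ℝ) < 2 + b := by linarith
  have h1 : ‖Wfun N b x‖ = gfun N b (pex N b) x := by
    rw [Wfun_eq, Real.norm_eq_abs, abs_of_pos (g_pos hN hb _ x)]
  rw [h1, show ((N:ℝ)-2) = (2+b) * pex N b by rw [pex]; field_simp]
  exact g_bound hN hb (pex_nonneg hN hb) x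

lemma F_bound (x : Euc N) :
    ‖J N (Vf N b x)‖ ≤ KK N b ^ (pex N b + 1) * (1+‖x‖)^(-((N:ℝ)-1)) := by
  have hnb := Nb_pos hN hb
  have h2b : (0:ℝ) < 2 + b := by linarith
  have h1r : (0:ℝ) < 1 + ‖x‖ := by positivity
  have hp1 : (0:ℝ) ≤ pex N b + 1 := by linarith [pex_nonneg hN hb]
  have h0 : ‖J N (Vf N b x)‖ = ‖Vf N b x‖ := by
    rw [J_eq_innerSL, innerSL_apply_norm]
  have hkk : |kk N b| ≤ 1 := by
    rw [kk, abs_neg, abs_of_pos (by positivity)]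
    rw [div_le_one hnb]
    have := hNR hN hb; linarith
  have h2 : ‖Vf N b x‖ ≤ ‖x‖^b * gfun N b (pex N b + 1) x * ‖x‖ := by
    rw [Vf, norm_smul, Real.norm_eq_abs, sf, abs_mul, abs_mul,
      abs_of_nonneg (Real.rpow_nonneg (norm_nonneg _) _),
      abs_of_pos (g_pos hN hb _ x)]
    have : |kk N b| * (‖x‖^b * gfun N b (pex N b + 1) x)
        ≤ 1 * (‖x‖^b * gfun N b (pex N b + 1) x) :=
      mul_le_mul_of_nonneg_right hkk
        (mul_nonneg (Real.rpow_nonneg (norm_nonneg _) _) (g_pos hN hb _ x).le)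
    calc |kk N b| * (‖x‖^b * gfun N b (pex N b + 1) x) * ‖x‖
        ≤ 1 * (‖x‖^b * gfun N b (pex N b + 1) x) * ‖x‖ :=
          mul_le_mul_of_nonneg_right this (norm_nonneg _)
      _ = ‖x‖^b * gfun N b (pex N b + 1) x * ‖x‖ := by ring
  have h3 : ‖x‖^b * ‖x‖ ≤ (1+‖x‖)^(b+1) := by
    have e : ‖x‖^b * ‖x‖ = ‖x‖^(b+1) := by
      rw [show ‖x‖ ^ (b+1) = ‖x‖ ^ (b + (1:ℝ)) by norm_num,
        Real.rpow_add' (norm_nonneg _) (by positivity), Real.rpow_one]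
    rw [e]
    exact Real.rpow_le_rpow (norm_nonneg _) (by linarith [norm_nonneg x]) (by positivity)
  have h4 := g_bound hN hb (q := pex N b + 1) hp1 x
  calc ‖J N (Vf N b x)‖ = ‖Vf N b x‖ := h0
    _ ≤ ‖x‖^b * gfun N b (pex N b + 1) x * ‖x‖ := h2
    _ = (‖x‖^b * ‖x‖) * gfun N b (pex N b + 1) x := by ring
    _ ≤ (1+‖x‖)^(b+1) * (KK N b ^ (pex N b + 1) * (1+‖x‖)^(-((2+b)*(pex N b + 1)))) := by
        apply mul_le_mul h3 h4 (g_pos hN hb _ x).le (Real.rpow_nonneg h1r.le _)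
    _ = KK N b ^ (pex N b + 1) *
          ((1+‖x‖)^(b+1) * (1+‖x‖)^(-((2+b)*(pex N b + 1)))) := by ring
    _ = KK N b ^ (pex N b + 1) * (1+‖x‖)^(-((N:ℝ)-1)) := by
        rw [← Real.rpow_add h1r]
        congr 2
        rw [pex]
        field_simp
        ring

lemma W_memLp : MemLp (Wfun N b) (ENNReal.ofReal (2 * (N:ℝ) / ((N:ℝ) - 2))) volume := by
  have hm2 : (0:ℝ) < (N:ℝ) - 2 := by have := hNR hN hb; linarith
  have hNpos : (0:ℝ) < (N:ℝ) := by have := hNR hN hb; linarith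
  exact memLp_aux
    (hf := by rw [Wfun_eq]; exact continuous_g hN hb _)
    (hC := Real.rpow_nonneg (KK_pos hN hb).le _)
    (hs := by positivity)
    (hrs := by
      rw [show ((N:ℝ)-2) * (2 * (N:ℝ) / ((N:ℝ) - 2)) = 2 * (N:ℝ) by field_simp]
      linarith)
    (hfb := W_bound hN hb)

lemma F_memLp : MemLp (fun x => J N (Vf N b x)) 2 volume := by
  have hm2 : (0:ℝ) < (N:ℝ) - 2 := by have := hNR hN hb; linarith
  have h := memLp_aux (s := 2)
    (hf := (J N).continuous.comp (continuous_Vf hN hb))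
    (hC := Real.rpow_nonneg (KK_pos hN hb).le _)
    (hs := by norm_num)
    (hrs := by linarith)
    (hfb := F_bound hN hb)
  have h2 : ENNReal.ofReal (2:ℝ) = (2 : ℝ≥0∞) := by norm_num
  rwa [h2] at h

end WAux


/-- The function `W` is a positive radial `C²` solution of the energy-critical equation
`-ΔW = |x|^b W^{(N+2+2b)/(N-2)}`, with `W ∈ L^{2N/(N-2)}` and `∇W ∈ L²`
(equations (1.12)–(1.13) of the paper). -/
theorem Wfun_solves_critical_equation (N : ℕ) (b : ℝ) (hN : 3 ≤ N) (hb : 0 < b) :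
    (∀ x : Euc N, 0 < Wfun N b x) ∧
      Radial (Wfun N b) ∧
      ContDiff ℝ 2 (Wfun N b) ∧
      MemLp (Wfun N b) (ENNReal.ofReal (2 * (N : ℝ) / ((N : ℝ) - 2))) volume ∧
      MemLp (fun x => fderiv ℝ (Wfun N b) x) 2 volume ∧
      ∀ x : Euc N, -lap (Wfun N b) x =
        ‖x‖ ^ b * Wfun N b x ^ (((N : ℝ) + 2 + 2 * b) / ((N : ℝ) - 2)) := by
  refine ⟨?_, ?_, ?_, ?_, ?_, ?_⟩
  · intro x
    exact Real.rpow_pos_of_pos (WAux.A_pos hN hb x) _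
  · intro x y h
    unfold Wfun
    rw [h]
  · exact WAux.contDiff_W hN hb
  · exact WAux.W_memLp hN hb
  · have h := WAux.F_memLp hN hb
    rw [WAux.fderiv_W_eq hN hb]
    exact h
  · intro x
    rw [WAux.lap_eq hN hb x]
    exact WAux.pde hN hb x
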